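/- Let m, n ≥ 1 be coprime integers and k ≥ 0 with k ≤ n−1 and k ≤ m−1. The number of pairs (π, M), where π is a Dyck path in the m×n rectangle and M is a k-element subset of the set of external corners of π (a marked Dyck path with k marks), equals (m+n−k−1)! / ( m · n · (n−k−1)! · (m−k−1)! · k! ). -/

import Mathlib

/-!
A lattice path from `(0,0)` to `(m,n)` is encoded by the set `S ⊆ {0, …, m+n-1}` of
(0-indexed) positions of its `E`-steps, with `S.card = m`; positions not in `S` carry
`N`-steps.  An external corner of the path is an index `i` with `0 ≤ i ≤ m+n-2` such
that step `i` is `E` and step `i+1` is `N` (this is the set of 1-indexed indices from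
the informal statement, shifted down by one).
-/

/-- The set of external corners of the lattice path encoded by `S` in the `m × n`
rectangle. -/
def corners (m n : ℕ) (S : Finset ℕ) : Finset ℕ :=
  (Finset.range (m + n - 1)).filter fun i => i ∈ S ∧ (i + 1) ∉ S

/-- The path encoded by `S` is a Dyck path in the `m × n` rectangle: it stays weakly
above the diagonal, i.e. every prefix (of length `j`) with `a` E-steps and `b = j - a`
N-steps satisfies `b·m ≥ a·n`. -/
def IsDyck (m n : ℕ) (S : Finset ℕ) : Prop :=
  ∀ j ∈ Finset.range (m + n + 1),
    (S ∩ Finset.range j).card * n ≤ (j - (S ∩ Finset.range j).card) * m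

instance (m n : ℕ) : DecidablePred (IsDyck m n) := fun _ => by
  unfold IsDyck; infer_instance

namespace MDP
open Finset

/-- rotation of a set of positions by `t` modulo `L`. -/
def rot (L t : ℕ) (S : Finset ℕ) : Finset ℕ := S.image fun i => (i + t) % L

/-- cyclic corners -/
def cyc (L : ℕ) (S : Finset ℕ) : Finset ℕ :=
  (Finset.range L).filter fun i => i ∈ S ∧ (i + 1) % L ∉ S

lemma addmod_inj {L t x y : ℕ} (hx : x < L) (hy : y < L)
    (h : (x + t) % L = (y + t) % L) : x = y := by
  have h1 : x ≡ y [MOD L] := Nat.ModEq.add_right_cancel' t h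
  have := h1.eq_of_lt_of_lt hx hy
  exact this

lemma mem_rot {L t y : ℕ} {S : Finset ℕ} :
    y ∈ rot L t S ↔ ∃ x ∈ S, (x + t) % L = y := by simp [rot]

lemma rot_subset_range {L t : ℕ} (hL : 0 < L) (S : Finset ℕ) :
    rot L t S ⊆ range L := by
  intro y hy
  rcases mem_rot.1 hy with ⟨x, _, rfl⟩
  exact mem_range.2 (Nat.mod_lt _ hL)

lemma mem_rot_iff {L t x : ℕ} {S : Finset ℕ} (hS : S ⊆ range L) (hx : x < L) :
    (x + t) % L ∈ rot L t S ↔ x ∈ S := by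
  constructor
  · intro h
    rcases mem_rot.1 h with ⟨x', hx', he⟩
    have : x' = x := addmod_inj (mem_range.1 (hS hx')) hx he
    rwa [this] at hx'
  · intro h; exact mem_rot.2 ⟨x, h, rfl⟩

lemma card_rot {L t : ℕ} {S : Finset ℕ} (hS : S ⊆ range L) :
    (rot L t S).card = S.card := by
  apply Finset.card_image_of_injOn
  intro x hx y hy h
  exact addmod_inj (mem_range.1 (hS hx)) (mem_range.1 (hS hy)) h

lemma rot_zero {L : ℕ} {S : Finset ℕ} (hS : S ⊆ range L) : rot L 0 S = S := by
  unfold rot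
  rw [Finset.image_congr (g := id), Finset.image_id]
  intro x hx
  simp only [id]
  exact Nat.mod_eq_of_lt (by simpa using mem_range.1 (hS hx))

lemma rot_rot {L t t' : ℕ} (S : Finset ℕ) :
    rot L t (rot L t' S) = rot L ((t' + t) % L) S := by
  unfold rot
  rw [Finset.image_image]
  apply Finset.image_congr
  intro x _
  simp only [Function.comp_apply]
  rw [Nat.mod_add_mod]
  conv_rhs => rw [Nat.add_mod, Nat.mod_mod_of_dvd _ dvd_rfl]
  rw [← Nat.add_mod, ← Nat.add_assoc]

lemma cyc_subset {L : ℕ} {S : Finset ℕ} : cyc L S ⊆ S := by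
  intro x hx
  exact ((Finset.mem_filter.1 hx).2).1

lemma cyc_subset_range {L : ℕ} {S : Finset ℕ} : cyc L S ⊆ range L :=
  Finset.filter_subset _ _

lemma mem_cyc {L x : ℕ} {S : Finset ℕ} :
    x ∈ cyc L S ↔ x < L ∧ x ∈ S ∧ (x + 1) % L ∉ S := by
  simp [cyc, Finset.mem_filter]

lemma cyc_rot {L t : ℕ} {S : Finset ℕ} (hL : 0 < L) (hS : S ⊆ range L) :
    cyc L (rot L t S) = rot L t (cyc L S) := by
  ext i
  constructor
  · intro hi
    rcases mem_cyc.1 hi with ⟨hiL, hiS, hnext⟩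
    rcases mem_rot.1 hiS with ⟨x, hx, rfl⟩
    refine mem_rot.2 ⟨x, ?_, rfl⟩
    have hxL : x < L := mem_range.1 (hS hx)
    refine mem_cyc.2 ⟨hxL, hx, fun hc => hnext ?_⟩
    have h1 : (((x + 1) % L) + t) % L = ((x + t) % L + 1) % L := by
      rw [Nat.mod_add_mod, Nat.mod_add_mod]
      ring_nf
    rw [← h1]
    exact mem_rot.2 ⟨_, hc, rfl⟩
  · intro hi
    rcases mem_rot.1 hi with ⟨x, hx, rfl⟩
    rcases mem_cyc.1 hx with ⟨hxL, hxS, hnext⟩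
    refine mem_cyc.2 ⟨Nat.mod_lt _ hL, mem_rot.2 ⟨x, hxS, rfl⟩, fun hc => hnext ?_⟩
    have h1 : ((x + t) % L + 1) % L = (((x + 1) % L) + t) % L := by
      rw [Nat.mod_add_mod, Nat.mod_add_mod]
      ring_nf
    rw [h1] at hc
    rcases mem_rot.1 hc with ⟨y, hy, he⟩
    have : y = (x + 1) % L :=
      addmod_inj (mem_range.1 (hS hy)) (Nat.mod_lt _ hL) he
    rwa [← this]

/-- For a word starting with N and ending with E, the cyclic corners are the
linear corners together with the last position. -/
lemma cyc_eq_insert {m n : ℕ} {S : Finset ℕ} (hm : 1 ≤ m) (hn : 1 ≤ n)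
    (h0 : 0 ∉ S) (hl : m + n - 1 ∈ S) (hS : S ⊆ range (m + n)) :
    cyc (m + n) S = insert (m + n - 1) (corners m n S) := by
  have hL : 0 < m + n := by omega
  ext i
  rw [mem_cyc, Finset.mem_insert]
  constructor
  · rintro ⟨hiL, hiS, hnext⟩
    by_cases hi : i = m + n - 1
    · exact Or.inl hi
    · refine Or.inr (Finset.mem_filter.2 ⟨mem_range.2 (by omega), hiS, ?_⟩)
      have : (i + 1) % (m + n) = i + 1 := Nat.mod_eq_of_lt (by omega)
      rwa [this] at hnext
  · rintro (rfl | hi)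
    · refine ⟨by omega, hl, ?_⟩
      have : (m + n - 1 + 1) % (m + n) = 0 := by
        have : m + n - 1 + 1 = m + n := by omega
        rw [this, Nat.mod_self]
      rwa [this]
    · rcases Finset.mem_filter.1 hi with ⟨hir, hiS, hnext⟩
      have hiL : i < m + n - 1 := mem_range.1 hir
      refine ⟨by omega, hiS, ?_⟩
      have : (i + 1) % (m + n) = i + 1 := Nat.mod_eq_of_lt (by omega)
      rwa [this]

lemma last_not_mem_corners {m n : ℕ} {S : Finset ℕ} : m + n - 1 ∉ corners m n S := by
  intro h
  exact absurd (mem_range.1 (Finset.mem_filter.1 h).1) (by omega)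

lemma corners_subset {m n : ℕ} {S : Finset ℕ} : corners m n S ⊆ S := fun x hx =>
  ((Finset.mem_filter.1 hx).2).1

lemma cyc_card {m n : ℕ} {S : Finset ℕ} (hm : 1 ≤ m) (hn : 1 ≤ n)
    (h0 : 0 ∉ S) (hl : m + n - 1 ∈ S) (hS : S ⊆ range (m + n)) :
    (cyc (m + n) S).card = (corners m n S).card + 1 := by
  rw [cyc_eq_insert hm hn h0 hl hS, Finset.card_insert_of_notMem last_not_mem_corners]

/-- number of E-steps among the first `j` steps. -/
def pre (S : Finset ℕ) (j : ℕ) : ℕ := (S ∩ Finset.range j).card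

lemma pre_mono {S : Finset ℕ} {u w : ℕ} (h : u ≤ w) : pre S u ≤ pre S w :=
  Finset.card_le_card (Finset.inter_subset_inter (le_refl S) (Finset.range_subset_range.2 h))

lemma pre_le {S : Finset ℕ} {j : ℕ} : pre S j ≤ j := by
  have h1 : S ∩ Finset.range j ⊆ Finset.range j := Finset.inter_subset_right
  have := Finset.card_le_card h1
  simpa [pre] using this

lemma pre_add {S : Finset ℕ} {u w : ℕ} (h : u ≤ w) :
    pre S u + (S ∩ Finset.Ico u w).card = pre S w := by
  unfold pre
  rw [← Finset.card_union_of_disjoint]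
  · congr 1
    ext x
    simp only [Finset.mem_union, Finset.mem_inter, Finset.mem_range, Finset.mem_Ico]
    constructor
    · rintro (⟨h1, h2⟩ | ⟨h1, h2⟩) <;> exact ⟨h1, by omega⟩
    · rintro ⟨h1, h2⟩
      by_cases hx : x < u
      · exact Or.inl ⟨h1, hx⟩
      · exact Or.inr ⟨h1, by omega⟩
  · apply Finset.disjoint_left.2
    intro x hx hx'
    simp only [Finset.mem_inter, Finset.mem_range, Finset.mem_Ico] at hx hx'
    omega

lemma pre_top {L : ℕ} {S : Finset ℕ} (hS : S ⊆ Finset.range L) {w : ℕ} (h : L ≤ w) :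
    pre S w = S.card := by
  unfold pre
  congr 1
  rw [Finset.inter_eq_left]
  exact hS.trans (Finset.range_subset_range.2 h)

lemma isDyck_iff {m n : ℕ} {S : Finset ℕ} :
    IsDyck m n S ↔ ∀ j ≤ m + n, (m + n) * pre S j ≤ m * j := by
  unfold IsDyck
  have main : ∀ j, (pre S j * n ≤ (j - pre S j) * m ↔ (m + n) * pre S j ≤ m * j) := by
    intro j
    have hle : pre S j ≤ j := pre_le
    have e1 : (j - pre S j) * m = j * m - pre S j * m := Nat.sub_mul _ _ _
    have e2 : pre S j * m ≤ j * m := Nat.mul_le_mul_right _ hle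
    rw [e1, Nat.le_sub_iff_add_le e2]
    constructor
    · intro h
      have e3 : (m + n) * pre S j = pre S j * n + pre S j * m := by ring
      have e4 : m * j = j * m := by ring
      linarith
    · intro h
      have e3 : (m + n) * pre S j = pre S j * n + pre S j * m := by ring
      have e4 : m * j = j * m := by ring
      linarith
  constructor
  · intro h j hj
    exact (main j).1 (h j (Finset.mem_range.2 (by omega)))
  · intro h j hj
    rw [Finset.mem_range] at hj
    exact (main j).2 (h j (by omega))

/-- the potential function for the cycle lemma. -/
def phi (m L : ℕ) (S : Finset ℕ) (j : ℕ) : ℤ := (m : ℤ) * j - (L : ℤ) * pre S j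

/-- Counting E's of the rotated word below `j`. -/
lemma pre_rot {L t j : ℕ} {S : Finset ℕ} (hS : S ⊆ Finset.range L) (ht : t ≤ L)
    (hj : j ≤ L) :
    pre (rot L t S) j = pre S (j - t) + (S ∩ Finset.Ico (L - t) (L - t + j)).card := by
  classical
  have hinj : Set.InjOn (fun x => (x + t) % L) S := fun x hx y hy h =>
    addmod_inj (Finset.mem_range.1 (hS hx)) (Finset.mem_range.1 (hS hy)) h
  have h1 : rot L t S ∩ Finset.range j = (S.filter fun x => (x + t) % L < j).image
      (fun x => (x + t) % L) := by
    ext y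
    simp only [Finset.mem_inter, Finset.mem_range, mem_rot, Finset.mem_image,
      Finset.mem_filter]
    constructor
    · rintro ⟨⟨x, hx, rfl⟩, hy⟩
      exact ⟨x, ⟨hx, hy⟩, rfl⟩
    · rintro ⟨x, ⟨hx, hlt⟩, rfl⟩
      exact ⟨⟨x, hx, rfl⟩, hlt⟩
  have h2 : (S.filter fun x => (x + t) % L < j) =
      (S ∩ Finset.range (j - t)) ∪ (S ∩ Finset.Ico (L - t) (L - t + j)) := by
    ext x
    simp only [Finset.mem_filter, Finset.mem_union, Finset.mem_inter, Finset.mem_range,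
      Finset.mem_Ico]
    constructor
    · rintro ⟨hx, hlt⟩
      have hxL : x < L := Finset.mem_range.1 (hS hx)
      by_cases hc : x < L - t
      · left
        refine ⟨hx, ?_⟩
        have : (x + t) % L = x + t := Nat.mod_eq_of_lt (by omega)
        omega
      · right
        refine ⟨hx, by omega, ?_⟩
        have : (x + t) % L = x + t - L := by
          rw [Nat.mod_eq_sub_mod (by omega), Nat.mod_eq_of_lt (by omega)]
        omega
    · rintro (⟨hx, hlt⟩ | ⟨hx, hge, hlt⟩)
      · have hxL : x < L := Finset.mem_range.1 (hS hx)
        refine ⟨hx, ?_⟩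
        have : (x + t) % L = x + t := Nat.mod_eq_of_lt (by omega)
        omega
      · have hxL : x < L := Finset.mem_range.1 (hS hx)
        refine ⟨hx, ?_⟩
        have : (x + t) % L = x + t - L := by
          rw [Nat.mod_eq_sub_mod (by omega), Nat.mod_eq_of_lt (by omega)]
        omega
  have hdisj : Disjoint (S ∩ Finset.range (j - t)) (S ∩ Finset.Ico (L - t) (L - t + j)) := by
    apply Finset.disjoint_left.2
    intro x hx hx'
    simp only [Finset.mem_inter, Finset.mem_range, Finset.mem_Ico] at hx hx'
    omega
  calc pre (rot L t S) j = (rot L t S ∩ Finset.range j).card := rfl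
    _ = ((S.filter fun x => (x + t) % L < j).image (fun x => (x + t) % L)).card := by
        rw [h1]
    _ = (S.filter fun x => (x + t) % L < j).card :=
        Finset.card_image_of_injOn (hinj.mono (by intro x hx; exact (Finset.mem_filter.1 (by exact_mod_cast hx)).1))
    _ = _ := by rw [h2, Finset.card_union_of_disjoint hdisj]; rfl

/-- The rotated word is a Dyck path iff the cut point is a minimum of the
potential function. -/
lemma dyck_rot_iff {m n t : ℕ} {S : Finset ℕ} (hS : S ⊆ Finset.range (m + n))
    (hcard : S.card = m) (ht : t ≤ m + n) :
    IsDyck m n (rot (m + n) t S) ↔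
      ∀ v ≤ m + n, phi m (m + n) S (m + n - t) ≤ phi m (m + n) S v := by
  have hpre0 : pre S 0 = 0 := by simp [pre]
  have hUc : ((m + n - t : ℕ) : ℤ) = (m : ℤ) + n - t := by
    push_cast [Nat.cast_sub ht]; ring
  rw [isDyck_iff]
  constructor
  · intro h v hv
    by_cases hvu : m + n - t ≤ v
    · set j := v - (m + n - t) with hjdef
      have hj : j ≤ m + n := by omega
      have hthis := h j hj
      rw [pre_rot hS ht hj] at hthis
      have h0 : j - t = 0 := by omega
      rw [h0, hpre0] at hthis
      have hadd := pre_add (S := S) (u := m + n - t) (w := (m + n - t) + j) (by omega)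
      rw [show (m + n - t) + j = v by omega] at hthis hadd
      set c := (S ∩ Finset.Ico (m + n - t) v).card
      unfold phi
      have hc1 : ((pre S v : ℕ) : ℤ) = (pre S (m + n - t) : ℤ) + c := by
        exact_mod_cast congrArg (Nat.cast (R := ℤ)) hadd.symm
      have hc2 : ((m + n) * (0 + c) : ℤ) ≤ (m : ℤ) * j := by exact_mod_cast hthis
      have hjc : (j : ℤ) = (v : ℤ) - ((m : ℤ) + n - t) := by
        rw [hjdef]; push_cast [Nat.cast_sub hvu, hUc]; ring
      have hc1' : ((m : ℤ) + n) * (pre S v : ℤ) =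
          ((m : ℤ) + n) * (pre S (m + n - t) : ℤ) + ((m : ℤ) + n) * c := by
        rw [hc1]; ring
      have hjc' : (m : ℤ) * j = (m : ℤ) * v - (m : ℤ) * ((m : ℤ) + n - t) := by
        rw [hjc]; ring
      rw [hUc]
      push_cast
      linarith [hc1', hc2, hjc']
    · set j := t + v with hjdef
      have hj : j ≤ m + n := by omega
      have hthis := h j hj
      rw [pre_rot hS ht hj] at hthis
      have h0 : j - t = v := by omega
      rw [h0] at hthis
      have hadd := pre_add (S := S) (u := m + n - t) (w := (m + n - t) + j) (by omega)
      have htop : pre S ((m + n - t) + j) = m := by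
        rw [pre_top hS (by omega), hcard]
      rw [htop] at hadd
      set c := (S ∩ Finset.Ico (m + n - t) ((m + n - t) + j)).card
      unfold phi
      have hc1 : ((pre S (m + n - t) : ℕ) : ℤ) + c = (m : ℤ) := by exact_mod_cast hadd
      have hc2 : ((m + n) * (pre S v + c) : ℤ) ≤ (m : ℤ) * j := by exact_mod_cast hthis
      have hjc : (j : ℤ) = (t : ℤ) + v := by rw [hjdef]; push_cast; ring
      have hc1' : ((m : ℤ) + n) * (pre S (m + n - t) : ℤ) + ((m : ℤ) + n) * c =
          ((m : ℤ) + n) * m := by rw [← hc1]; ring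
      have hjc' : (m : ℤ) * j = (m : ℤ) * t + (m : ℤ) * v := by rw [hjc]; ring
      rw [hUc]
      push_cast
      linarith [hc1', hc2, hjc']
  · intro h j hj
    rw [pre_rot hS ht hj]
    by_cases hjt : j ≤ t
    · have h0 : j - t = 0 := by omega
      rw [h0, hpre0]
      set v := (m + n - t) + j with hvdef
      have hv : v ≤ m + n := by omega
      have hphi := h v hv
      have hadd := pre_add (S := S) (u := m + n - t) (w := v) (by omega)
      set c := (S ∩ Finset.Ico (m + n - t) v).card
      unfold phi at hphi
      have hc1 : ((pre S v : ℕ) : ℤ) = (pre S (m + n - t) : ℤ) + c := by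
        exact_mod_cast congrArg (Nat.cast (R := ℤ)) hadd.symm
      have hvc : (v : ℤ) = ((m : ℤ) + n - t) + j := by rw [hvdef]; push_cast [hUc]; ring
      have hc1' : ((m : ℤ) + n) * (pre S v : ℤ) =
          ((m : ℤ) + n) * (pre S (m + n - t) : ℤ) + ((m : ℤ) + n) * c := by
        rw [hc1]; ring
      have goalZ : ((m + n) * (0 + c) : ℤ) ≤ (m : ℤ) * j := by
        rw [hUc] at hphi
        have hvc' : (m : ℤ) * v = (m : ℤ) * ((m : ℤ) + n - t) + (m : ℤ) * j := by
          rw [hvc]; ring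
        push_cast at hphi ⊢
        linarith [hc1', hphi, hvc']
      exact_mod_cast goalZ
    · set v := j - t with hvdef
      have hv : v ≤ m + n := by omega
      have hphi := h v hv
      have hadd := pre_add (S := S) (u := m + n - t) (w := (m + n - t) + j) (by omega)
      have htop : pre S ((m + n - t) + j) = m := by
        rw [pre_top hS (by omega), hcard]
      rw [htop] at hadd
      set c := (S ∩ Finset.Ico (m + n - t) ((m + n - t) + j)).card
      unfold phi at hphi
      have hc1 : ((pre S (m + n - t) : ℕ) : ℤ) + c = (m : ℤ) := by exact_mod_cast hadd
      have hvc : (v : ℤ) = (j : ℤ) - t := by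
        rw [hvdef]; push_cast [Nat.cast_sub (by omega : t ≤ j)]; ring
      have hc1' : ((m : ℤ) + n) * (pre S (m + n - t) : ℤ) + ((m : ℤ) + n) * c =
          ((m : ℤ) + n) * m := by rw [← hc1]; ring
      have goalZ : ((m + n) * (pre S v + c) : ℤ) ≤ (m : ℤ) * j := by
        rw [hUc] at hphi
        have hvc' : (m : ℤ) * v = (m : ℤ) * j - (m : ℤ) * t := by rw [hvc]; ring
        push_cast at hphi ⊢
        linarith [hc1', hphi, hvc']
      exact_mod_cast goalZ

lemma phi_zero {m L : ℕ} {S : Finset ℕ} : phi m L S 0 = 0 := by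
  simp [phi, pre]

lemma phi_top {m n : ℕ} {S : Finset ℕ} (hS : S ⊆ Finset.range (m + n))
    (hcard : S.card = m) : phi m (m + n) S (m + n) = 0 := by
  unfold phi
  rw [pre_top hS (le_refl _), hcard]
  ring

lemma phi_strict_aux {m n v v' : ℕ} {S : Finset ℕ} (hco : Nat.Coprime m n)
    (hm : 1 ≤ m) (hn : 1 ≤ n) (hv : v ≤ m + n) (hle : v' ≤ v)
    (h : phi m (m + n) S v = phi m (m + n) S v') :
    v = v' ∨ (v = m + n ∧ v' = 0) := by
  have hpre : pre S v' ≤ pre S v := pre_mono hle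
  set d := v - v' with hd
  set e := pre S v - pre S v' with he
  have hdz : (d : ℤ) = (v : ℤ) - v' := by rw [hd]; push_cast [Nat.cast_sub hle]; ring
  have hez : (e : ℤ) = (pre S v : ℤ) - pre S v' := by
    rw [he]; push_cast [Nat.cast_sub hpre]; ring
  have hZ : (m : ℤ) * d = ((m : ℤ) + n) * e := by
    unfold phi at h
    rw [hdz, hez]
    push_cast at h ⊢
    linarith
  have hN : m * d = (m + n) * e := by exact_mod_cast hZ
  have hdvd : (m + n) ∣ m * d := ⟨e, hN⟩
  have hcop : (m + n).Coprime m := by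
    have h1 : m.Coprime (n + m) := (Nat.coprime_add_self_right).2 hco
    have := h1.symm
    rwa [Nat.add_comm] at this
  have hdvd2 : (m + n) ∣ d := hcop.dvd_of_dvd_mul_left hdvd
  by_cases hd0 : d = 0
  · left; omega
  · right
    have := Nat.le_of_dvd (by omega) hdvd2
    omega

lemma phi_strict {m n v v' : ℕ} {S : Finset ℕ} (hco : Nat.Coprime m n)
    (hm : 1 ≤ m) (hn : 1 ≤ n) (hv : v ≤ m + n) (hv' : v' ≤ m + n)
    (h : phi m (m + n) S v = phi m (m + n) S v') :
    v = v' ∨ (v = m + n ∧ v' = 0) ∨ (v' = m + n ∧ v = 0) := by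
  rcases le_total v' v with hle | hle
  · rcases phi_strict_aux hco hm hn hv hle h with h1 | h1
    · exact Or.inl h1
    · exact Or.inr (Or.inl h1)
  · rcases phi_strict_aux hco hm hn hv' hle h.symm with h1 | h1
    · exact Or.inl h1.symm
    · exact Or.inr (Or.inr h1)

lemma exists_goodT {m n : ℕ} {S : Finset ℕ} (hm : 1 ≤ m) (hn : 1 ≤ n)
    (hS : S ⊆ Finset.range (m + n)) (hcard : S.card = m) :
    ∃ t, t < m + n ∧ IsDyck m n (rot (m + n) t S) := by
  have hW : (Finset.Icc 1 (m + n)).Nonempty := ⟨m + n, by simp; omega⟩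
  obtain ⟨u, hu, hmin⟩ := Finset.exists_min_image _ (phi m (m + n) S) hW
  rw [Finset.mem_Icc] at hu
  refine ⟨m + n - u, by omega, ?_⟩
  rw [dyck_rot_iff hS hcard (by omega)]
  intro v hv
  rw [show m + n - (m + n - u) = u by omega]
  by_cases hv0 : v = 0
  · subst hv0
    rw [phi_zero]
    have := hmin (m + n) (Finset.mem_Icc.2 (by omega))
    rwa [phi_top hS hcard] at this
  · exact hmin v (Finset.mem_Icc.2 (by omega))

lemma goodT_unique {m n t₁ t₂ : ℕ} {S : Finset ℕ} (hm : 1 ≤ m) (hn : 1 ≤ n)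
    (hco : Nat.Coprime m n) (hS : S ⊆ Finset.range (m + n)) (hcard : S.card = m)
    (h1 : t₁ < m + n) (h2 : t₂ < m + n)
    (hd1 : IsDyck m n (rot (m + n) t₁ S)) (hd2 : IsDyck m n (rot (m + n) t₂ S)) :
    t₁ = t₂ := by
  rw [dyck_rot_iff hS hcard (le_of_lt h1)] at hd1
  rw [dyck_rot_iff hS hcard (le_of_lt h2)] at hd2
  have ha := hd1 (m + n - t₂) (by omega)
  have hb := hd2 (m + n - t₁) (by omega)
  have heq : phi m (m + n) S (m + n - t₁) = phi m (m + n) S (m + n - t₂) :=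
    le_antisymm ha (by linarith)
  rcases phi_strict hco hm hn (by omega) (by omega) heq with h | h | h
  · omega
  · omega
  · omega

lemma dyck_zero_not_mem {m n : ℕ} {S : Finset ℕ} (hn : 1 ≤ n)
    (h : IsDyck m n S) : 0 ∉ S := by
  intro h0
  have := (isDyck_iff.1 h) 1 (by omega)
  have hp : pre S 1 = 1 := by
    unfold pre
    rw [show S ∩ Finset.range 1 = {0} from ?_]
    · simp
    · ext x
      simp only [Finset.mem_inter, Finset.mem_range, Finset.mem_singleton]
      constructor
      · rintro ⟨_, hx⟩; omega
      · rintro rfl; exact ⟨h0, by omega⟩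
  rw [hp] at this
  omega

lemma dyck_last_mem {m n : ℕ} {S : Finset ℕ} (hm : 1 ≤ m) (hn : 1 ≤ n)
    (hS : S ⊆ Finset.range (m + n)) (hcard : S.card = m) (h : IsDyck m n S) :
    m + n - 1 ∈ S := by
  by_contra hne
  have hsub : S ⊆ Finset.range (m + n - 1) := by
    intro x hx
    have := Finset.mem_range.1 (hS hx)
    rw [Finset.mem_range]
    rcases Nat.lt_or_ge x (m + n - 1) with h' | h'
    · exact h'
    · exfalso; apply hne; rwa [show x = m + n - 1 by omega] at hx
  have hp : pre S (m + n - 1) = m := by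
    unfold pre
    rw [Finset.inter_eq_left.2 hsub, hcard]
  have := (isDyck_iff.1 h) (m + n - 1) (by omega)
  rw [hp] at this
  -- (m+n) * m ≤ m * (m+n-1)
  have e1 : m * (m + n - 1) + m = m * (m + n) := by
    rw [← Nat.mul_succ]
    congr 1
    omega
  have e2 : (m + n) * m = m * (m + n) := Nat.mul_comm _ _
  linarith

lemma corners_card_le_left {m n : ℕ} {S : Finset ℕ} (hlast : m + n - 1 ∈ S)
    (hcard : S.card = m) : (corners m n S).card + 1 ≤ m := by
  have hsub : corners m n S ⊆ S.erase (m + n - 1) := by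
    intro x hx
    rw [Finset.mem_erase]
    exact ⟨fun h => last_not_mem_corners (h ▸ hx), corners_subset hx⟩
  have := Finset.card_le_card hsub
  rw [Finset.card_erase_of_mem hlast, hcard] at this
  have hm : 1 ≤ m := by
    by_contra h
    have : m = 0 := by omega
    subst this
    simp at hcard
    subst hcard
    simp at hlast
  omega

lemma corners_card_le_right {m n : ℕ} {S : Finset ℕ} (h0 : 0 ∉ S)
    (hS : S ⊆ Finset.range (m + n)) (hcard : S.card = m) (hn : 1 ≤ n) :
    (corners m n S).card + 1 ≤ n := by
  have hinj : Set.InjOn (fun x => x + 1) (corners m n S) := fun a _ b _ h => by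
    simp only at h
    omega
  have hsub : (corners m n S).image (fun x => x + 1) ⊆
      ((Finset.range (m + n)) \ S).erase 0 := by
    intro y hy
    rcases Finset.mem_image.1 hy with ⟨x, hx, rfl⟩
    rcases Finset.mem_filter.1 hx with ⟨hr, hxS, hnx⟩
    rw [Finset.mem_erase, Finset.mem_sdiff, Finset.mem_range]
    have := Finset.mem_range.1 hr
    exact ⟨by omega, by omega, hnx⟩
  have hc1 := Finset.card_le_card hsub
  rw [Finset.card_image_of_injOn hinj] at hc1
  have hc2 : ((Finset.range (m + n)) \ S).card = n := by
    rw [Finset.card_sdiff_of_subset hS, Finset.card_range, hcard]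
    omega
  have h0m : 0 ∈ (Finset.range (m + n)) \ S := by
    rw [Finset.mem_sdiff, Finset.mem_range]
    exact ⟨by omega, h0⟩
  rw [Finset.card_erase_of_mem h0m, hc2] at hc1
  omega

open Finset in
/-- counting marked objects fiberwise -/
lemma card_marked {L : ℕ} (q : Finset ℕ → Prop) [DecidablePred q]
    (C : Finset ℕ → Finset ℕ) (k : ℕ) (hC : ∀ S, q S → C S ⊆ Finset.range L) :
    (((Finset.range L).powerset ×ˢ (Finset.range L).powerset).filter
      fun P => q P.1 ∧ P.2 ⊆ C P.1 ∧ P.2.card = k).card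
    = ∑ S ∈ (Finset.range L).powerset.filter q, ((C S).card.choose k) := by
  classical
  have hmap : ∀ P ∈ ((Finset.range L).powerset ×ˢ (Finset.range L).powerset).filter
      (fun P => q P.1 ∧ P.2 ⊆ C P.1 ∧ P.2.card = k),
      P.1 ∈ (Finset.range L).powerset.filter q := by
    intro P hP
    simp only [Finset.mem_filter, Finset.mem_product] at hP ⊢
    exact ⟨hP.1.1, hP.2.1⟩
  rw [Finset.card_eq_sum_card_fiberwise hmap]
  apply Finset.sum_congr rfl
  intro S hS
  simp only [Finset.mem_filter, Finset.mem_powerset] at hS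
  obtain ⟨hSr, hqS⟩ := hS
  rw [← Finset.card_powersetCard k (C S)]
  apply Finset.card_bij (fun P _ => P.2)
  · rintro ⟨S', M⟩ hP
    simp only [Finset.mem_filter, Finset.mem_product] at hP
    obtain ⟨⟨_, hq', hM, hMc⟩, hfst⟩ := hP
    obtain rfl : S' = S := hfst
    exact Finset.mem_powersetCard.2 ⟨hM, hMc⟩
  · rintro ⟨S₁, M₁⟩ h1 ⟨S₂, M₂⟩ h2 he
    simp only [Finset.mem_filter] at h1 h2
    simp only at he
    rw [Prod.ext_iff]
    exact ⟨h1.2.trans h2.2.symm, he⟩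
  · intro M hM
    rcases Finset.mem_powersetCard.1 hM with ⟨hMC, hMc⟩
    refine ⟨(S, M), Finset.mem_filter.2 ⟨?_, rfl⟩, rfl⟩
    exact Finset.mem_filter.2 ⟨Finset.mem_product.2
      ⟨Finset.mem_powerset.2 hSr, Finset.mem_powerset.2 (hMC.trans (hC S hqS))⟩,
      hqS, hMC, hMc⟩

open Finset in
/-- counting triples with a distinguished element of the mark set -/
lemma card_triples {L : ℕ} (q : Finset ℕ → Prop) [DecidablePred q]
    (C : Finset ℕ → Finset ℕ) (k : ℕ) (hC : ∀ S, q S → C S ⊆ Finset.range L) :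
    ((((Finset.range L).powerset ×ˢ (Finset.range L).powerset) ×ˢ Finset.range L).filter
      fun P => q P.1.1 ∧ P.1.2 ⊆ C P.1.1 ∧ P.1.2.card = k + 1 ∧ P.2 ∈ P.1.2).card
    = (k + 1) * (((Finset.range L).powerset ×ˢ (Finset.range L).powerset).filter
      fun P => q P.1 ∧ P.2 ⊆ C P.1 ∧ P.2.card = k + 1).card := by
  classical
  have hmap : ∀ P ∈ ((((Finset.range L).powerset ×ˢ (Finset.range L).powerset) ×ˢ
      Finset.range L).filter
      fun P => q P.1.1 ∧ P.1.2 ⊆ C P.1.1 ∧ P.1.2.card = k + 1 ∧ P.2 ∈ P.1.2),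
      P.1 ∈ ((Finset.range L).powerset ×ˢ (Finset.range L).powerset).filter
      (fun P => q P.1 ∧ P.2 ⊆ C P.1 ∧ P.2.card = k + 1) := by
    rintro ⟨⟨S, N⟩, e⟩ hP
    simp only [Finset.mem_filter, Finset.mem_product] at hP ⊢
    exact ⟨hP.1.1, hP.2.1, hP.2.2.1, hP.2.2.2.1⟩
  rw [Finset.card_eq_sum_card_fiberwise hmap]
  rw [Finset.sum_congr rfl (g := fun _ => k + 1) ?_, Finset.sum_const, smul_eq_mul,
    Nat.mul_comm]
  rintro ⟨S, N⟩ hP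
  simp only [Finset.mem_filter, Finset.mem_product, Finset.mem_powerset] at hP
  obtain ⟨⟨hSr, hNr⟩, hq, hsub, hcard⟩ := hP
  rw [← hcard]
  apply Finset.card_bij (fun x _ => x.2)
  · rintro ⟨⟨S', N'⟩, e⟩ hx
    simp only [Finset.mem_filter] at hx
    have h2 : (S', N') = (S, N) := hx.2
    obtain ⟨rfl, rfl⟩ := Prod.mk.inj h2
    exact hx.1.2.2.2.2
  · rintro ⟨⟨S₁, N₁⟩, e₁⟩ h1 ⟨⟨S₂, N₂⟩, e₂⟩ h2 he
    simp only [Finset.mem_filter] at h1 h2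
    simp only at he
    rw [Prod.ext_iff]
    exact ⟨h1.2.trans h2.2.symm, he⟩
  · intro e he
    have heL : e < L := Finset.mem_range.1 ((hC S hq) (hsub he))
    refine ⟨((S, N), e), Finset.mem_filter.2 ⟨?_, rfl⟩, rfl⟩
    exact Finset.mem_filter.2 ⟨Finset.mem_product.2 ⟨Finset.mem_product.2
      ⟨Finset.mem_powerset.2 hSr, Finset.mem_powerset.2 hNr⟩, Finset.mem_range.2 heL⟩,
      hq, hsub, rfl, he⟩

open Finset

/-- the set of marked Dyck paths with `k` marks (exactly the set in the theorem). -/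
def Aset (m n k : ℕ) : Finset (Finset ℕ × Finset ℕ) :=
  ((Finset.range (m + n)).powerset ×ˢ (Finset.range (m + n)).powerset).filter
    fun P => P.1.card = m ∧ IsDyck m n P.1 ∧ P.2 ⊆ corners m n P.1 ∧ P.2.card = k

/-- marked words starting with N and ending with E, with `k` marked corners. -/
def Yset (m n k : ℕ) : Finset (Finset ℕ × Finset ℕ) :=
  ((Finset.range (m + n)).powerset ×ˢ (Finset.range (m + n)).powerset).filter
    fun P => P.1.card = m ∧ 0 ∉ P.1 ∧ m + n - 1 ∈ P.1 ∧
      P.2 ⊆ corners m n P.1 ∧ P.2.card = k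

/-- Dyck paths with a `(k+1)`-subset of cyclic corners and a distinguished element. -/
def Lset (m n k : ℕ) : Finset ((Finset ℕ × Finset ℕ) × ℕ) :=
  (((Finset.range (m + n)).powerset ×ˢ (Finset.range (m + n)).powerset) ×ˢ
    Finset.range (m + n)).filter
    fun P => P.1.1.card = m ∧ IsDyck m n P.1.1 ∧ P.1.2 ⊆ cyc (m + n) P.1.1 ∧
      P.1.2.card = k + 1 ∧ P.2 ∈ P.1.2

lemma corners_subset_range {m n : ℕ} {S : Finset ℕ} :
    corners m n S ⊆ Finset.range (m + n) := by
  intro x hx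
  have := Finset.mem_range.1 (Finset.mem_filter.1 hx).1
  exact Finset.mem_range.2 (by omega)

lemma Aset_card (m n k : ℕ) :
    (Aset m n k).card = ∑ S ∈ (Finset.range (m + n)).powerset.filter
      (fun S => S.card = m ∧ IsDyck m n S), ((corners m n S).card.choose k) := by
  rw [← card_marked (L := m + n) (fun S => S.card = m ∧ IsDyck m n S) (corners m n) k
    (fun S _ => corners_subset_range)]
  congr 1
  apply Finset.filter_congr
  intro P _
  simp only [and_assoc]

lemma Lset_card (m n k : ℕ) (hm : 1 ≤ m) (hn : 1 ≤ n) :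
    (Lset m n k).card = (k + 1) * ((Aset m n k).card + (Aset m n (k + 1)).card) := by
  have h1 : (Lset m n k).card = (k + 1) *
      (((Finset.range (m + n)).powerset ×ˢ (Finset.range (m + n)).powerset).filter
        fun P => (P.1.card = m ∧ IsDyck m n P.1) ∧ P.2 ⊆ cyc (m + n) P.1 ∧
          P.2.card = k + 1).card := by
    rw [← card_triples (L := m + n) (fun S => S.card = m ∧ IsDyck m n S)
      (cyc (m + n)) k (fun S _ => cyc_subset_range)]
    congr 1
    apply Finset.filter_congr
    intro P _
    simp only [and_assoc]
  rw [h1]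
  congr 1
  rw [card_marked (L := m + n) (fun S => S.card = m ∧ IsDyck m n S) (cyc (m + n)) (k + 1)
    (fun S _ => cyc_subset_range), Aset_card, Aset_card, ← Finset.sum_add_distrib]
  apply Finset.sum_congr rfl
  intro S hS
  simp only [Finset.mem_filter, Finset.mem_powerset] at hS
  obtain ⟨hSr, hcard, hdyck⟩ := hS
  rw [cyc_card hm hn (dyck_zero_not_mem hn hdyck)
    (dyck_last_mem hm hn hSr hcard hdyck) hSr]
  exact Nat.choose_succ_succ _ _

lemma Aset_empty (m n k' : ℕ) (hm : 1 ≤ m) (hn : 1 ≤ n) (hk : n ≤ k' ∨ m ≤ k') :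
    (Aset m n k').card = 0 := by
  rw [Finset.card_eq_zero]
  unfold Aset
  rw [Finset.filter_eq_empty_iff]
  rintro ⟨S, M⟩ hP hcon
  simp only at hcon
  obtain ⟨hcard, hdyck, hsub, hMc⟩ := hcon
  simp only [Finset.mem_product, Finset.mem_powerset] at hP
  have h1 := corners_card_le_left (dyck_last_mem hm hn hP.1 hcard hdyck) hcard
  have h2 := corners_card_le_right (dyck_zero_not_mem hn hdyck) hP.1 hcard hn
  have h3 : M.card ≤ (corners m n S).card := Finset.card_le_card hsub
  omega

lemma corners_subset_cyc {m n : ℕ} {S : Finset ℕ} :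
    corners m n S ⊆ cyc (m + n) S := by
  intro p hp
  rcases Finset.mem_filter.1 hp with ⟨hr, hpS, hpn⟩
  have hpL : p < m + n - 1 := Finset.mem_range.1 hr
  refine mem_cyc.2 ⟨by omega, hpS, ?_⟩
  rwa [Nat.mod_eq_of_lt (by omega)]

lemma mod_sub {a L : ℕ} (h1 : L ≤ a) (h2 : a - L < L) : a % L = a - L := by
  rw [Nat.mod_eq_sub_mod h1, Nat.mod_eq_of_lt h2]

lemma rot_cancel {L t : ℕ} {S : Finset ℕ} (hS : S ⊆ Finset.range L) (ht : t < L) :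
    rot L ((L - t) % L) (rot L t S) = S := by
  rw [rot_rot]
  have h0 : (t + (L - t) % L) % L = 0 := by
    by_cases h : t = 0
    · subst h
      simp
    · have h1 : (L - t) % L = L - t := Nat.mod_eq_of_lt (by omega)
      rw [h1, show t + (L - t) = L by omega, Nat.mod_self]
  rw [h0, rot_zero hS]

/-- the canonical Dyck rotation amount. -/
def goodT (m n : ℕ) (S : Finset ℕ) : ℕ :=
  if h : ((Finset.range (m + n)).filter fun t => IsDyck m n (rot (m + n) t S)).Nonempty
  then ((Finset.range (m + n)).filter fun t => IsDyck m n (rot (m + n) t S)).min' h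
  else 0

lemma goodT_spec {m n : ℕ} {S : Finset ℕ} (hm : 1 ≤ m) (hn : 1 ≤ n)
    (hS : S ⊆ Finset.range (m + n)) (hcard : S.card = m) :
    goodT m n S < m + n ∧ IsDyck m n (rot (m + n) (goodT m n S) S) := by
  obtain ⟨t, ht, hd⟩ := exists_goodT hm hn hS hcard
  have hne : ((Finset.range (m + n)).filter
      fun t => IsDyck m n (rot (m + n) t S)).Nonempty :=
    ⟨t, Finset.mem_filter.2 ⟨Finset.mem_range.2 ht, hd⟩⟩
  rw [goodT, dif_pos hne]
  have := Finset.min'_mem _ hne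
  rw [Finset.mem_filter, Finset.mem_range] at this
  exact this

lemma goodT_eq {m n t : ℕ} {S : Finset ℕ} (hm : 1 ≤ m) (hn : 1 ≤ n)
    (hco : Nat.Coprime m n) (hS : S ⊆ Finset.range (m + n)) (hcard : S.card = m)
    (ht : t < m + n) (hd : IsDyck m n (rot (m + n) t S)) : goodT m n S = t := by
  obtain ⟨h1, h2⟩ := goodT_spec hm hn hS hcard
  exact goodT_unique hm hn hco hS hcard h1 ht h2 hd

/-- forward map of the rotation bijection. -/
def fwd (m n : ℕ) (x : (Finset ℕ × Finset ℕ) × ℕ) : Finset ℕ × Finset ℕ :=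
  (rot (m + n) (m + n - 1 - x.2) x.1.1, rot (m + n) (m + n - 1 - x.2) (x.1.2.erase x.2))

/-- backward map of the rotation bijection. -/
def bwd (m n : ℕ) (y : Finset ℕ × Finset ℕ) : (Finset ℕ × Finset ℕ) × ℕ :=
  ((rot (m + n) (goodT m n y.1) y.1,
    insert ((m + n - 1 + goodT m n y.1) % (m + n))
      (rot (m + n) (goodT m n y.1) y.2)),
    (m + n - 1 + goodT m n y.1) % (m + n))

lemma fwd_mem {m n k : ℕ} (hm : 1 ≤ m) (hn : 1 ≤ n) {x : (Finset ℕ × Finset ℕ) × ℕ}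
    (hx : x ∈ Lset m n k) : fwd m n x ∈ Yset m n k := by
  obtain ⟨⟨S, N⟩, e⟩ := x
  simp only [Lset, Finset.mem_filter, Finset.mem_product, Finset.mem_powerset,
    Finset.mem_range] at hx
  obtain ⟨⟨⟨hSr, hNr⟩, heL⟩, hcard, hdyck, hNsub, hNcard, heN⟩ := hx
  set t := m + n - 1 - e with htdef
  have ht : t < m + n := by omega
  have hecyc : e ∈ cyc (m + n) S := hNsub heN
  rcases mem_cyc.1 hecyc with ⟨heL', heS, henext⟩
  have himg : (e + t) % (m + n) = m + n - 1 := by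
    rw [show e + t = m + n - 1 by omega, Nat.mod_eq_of_lt (by omega)]
  have hS'r : rot (m + n) t S ⊆ Finset.range (m + n) := rot_subset_range (by omega) S
  have hresub : N.erase e ⊆ Finset.range (m + n) := (Finset.erase_subset _ _).trans
    (hNsub.trans cyc_subset_range)
  have h0' : 0 ∉ rot (m + n) t S := by
    intro h0
    rcases mem_rot.1 h0 with ⟨x', hx'S, hx'0⟩
    have hx'L : x' < m + n := Finset.mem_range.1 (hSr hx'S)
    have h1 : ((e + 1) % (m + n) + t) % (m + n) = 0 := by
      rw [Nat.mod_add_mod, show e + 1 + t = m + n by omega, Nat.mod_self]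
    have : x' = (e + 1) % (m + n) :=
      addmod_inj hx'L (Nat.mod_lt _ (by omega)) (by rw [hx'0, h1])
    exact henext (this ▸ hx'S)
  have hlast' : m + n - 1 ∈ rot (m + n) t S := mem_rot.2 ⟨e, heS, himg⟩
  simp only [fwd, Yset, Finset.mem_filter, Finset.mem_product, Finset.mem_powerset]
  refine ⟨⟨hS'r, rot_subset_range (by omega) _⟩, ?_, h0', hlast', ?_, ?_⟩
  · rw [card_rot hSr]; exact hcard
  · -- marks land in corners
    intro y hy
    rcases mem_rot.1 hy with ⟨x, hx, rfl⟩
    have hxN := Finset.mem_of_mem_erase hx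
    have hxne := Finset.ne_of_mem_erase hx
    have hxcyc : x ∈ cyc (m + n) S := hNsub hxN
    have hxL : x < m + n := Finset.mem_range.1 (cyc_subset_range hxcyc)
    have hy2 : (x + t) % (m + n) ∈ cyc (m + n) (rot (m + n) t S) := by
      rw [cyc_rot (by omega) hSr]
      exact mem_rot.2 ⟨x, hxcyc, rfl⟩
    rw [cyc_eq_insert hm hn h0' hlast' hS'r] at hy2
    rcases Finset.mem_insert.1 hy2 with h | h
    · exfalso
      exact hxne (addmod_inj hxL heL (by rw [h, himg]))
    · exact h
  · rw [card_rot hresub, Finset.card_erase_of_mem heN, hNcard]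
    omega

lemma bwd_mem {m n k : ℕ} (hm : 1 ≤ m) (hn : 1 ≤ n) {y : Finset ℕ × Finset ℕ}
    (hy : y ∈ Yset m n k) : bwd m n y ∈ Lset m n k := by
  obtain ⟨S', M'⟩ := y
  simp only [Yset, Finset.mem_filter, Finset.mem_product, Finset.mem_powerset] at hy
  obtain ⟨⟨hS'r, hM'r⟩, hcard, h0, hlastS, hMsub, hMcard⟩ := hy
  obtain ⟨ht'L, ht'dyck⟩ := goodT_spec hm hn hS'r hcard
  set t' := goodT m n S' with ht'def
  set e := (m + n - 1 + t') % (m + n) with hedef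
  have heL : e < m + n := Nat.mod_lt _ (by omega)
  have hlastcyc : m + n - 1 ∈ cyc (m + n) S' := by
    refine mem_cyc.2 ⟨by omega, hlastS, ?_⟩
    rw [show m + n - 1 + 1 = m + n by omega, Nat.mod_self]
    exact h0
  have hecyc : e ∈ cyc (m + n) (rot (m + n) t' S') := by
    rw [cyc_rot (by omega) hS'r]
    exact mem_rot.2 ⟨m + n - 1, hlastcyc, rfl⟩
  have henotM : e ∉ rot (m + n) t' M' := by
    intro hc
    rcases mem_rot.1 hc with ⟨x, hxM, hxe⟩
    have hxcor := hMsub hxM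
    have hxL : x < m + n - 1 := Finset.mem_range.1 (Finset.mem_filter.1 hxcor).1
    have : x = m + n - 1 := addmod_inj (by omega) (by omega) hxe
    omega
  simp only [bwd, Lset, Finset.mem_filter, Finset.mem_product, Finset.mem_powerset,
    Finset.mem_range]
  refine ⟨⟨⟨rot_subset_range (by omega) _, ?_⟩, heL⟩, ?_, ht'dyck, ?_, ?_, ?_⟩
  · intro z hz
    rcases Finset.mem_insert.1 hz with rfl | h
    · exact Finset.mem_range.2 heL
    · exact rot_subset_range (by omega) _ h
  · rw [card_rot hS'r]; exact hcard
  · intro z hz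
    rcases Finset.mem_insert.1 hz with rfl | h
    · exact hecyc
    · rw [cyc_rot (by omega) hS'r]
      rcases mem_rot.1 h with ⟨x, hxM, rfl⟩
      exact mem_rot.2 ⟨x, corners_subset_cyc (hMsub hxM), rfl⟩
  · rw [Finset.card_insert_of_notMem henotM,
      card_rot (hMsub.trans corners_subset_range), hMcard]
  · exact Finset.mem_insert_self _ _

lemma bwd_fwd {m n k : ℕ} (hm : 1 ≤ m) (hn : 1 ≤ n) (hco : Nat.Coprime m n)
    {x : (Finset ℕ × Finset ℕ) × ℕ} (hx : x ∈ Lset m n k) : bwd m n (fwd m n x) = x := by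
  obtain ⟨⟨S, N⟩, e⟩ := x
  simp only [Lset, Finset.mem_filter, Finset.mem_product, Finset.mem_powerset,
    Finset.mem_range] at hx
  obtain ⟨⟨⟨hSr, hNr⟩, heL⟩, hcard, hdyck, hNsub, hNcard, heN⟩ := hx
  set t := m + n - 1 - e with htdef
  have ht : t < m + n := by omega
  have hS'r : rot (m + n) t S ⊆ Finset.range (m + n) := rot_subset_range (by omega) S
  have hS'card : (rot (m + n) t S).card = m := by rw [card_rot hSr]; exact hcard
  have hback : rot (m + n) ((m + n - t) % (m + n)) (rot (m + n) t S) = S :=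
    rot_cancel hSr ht
  have hgoodT : goodT m n (rot (m + n) t S) = (m + n - t) % (m + n) := by
    apply goodT_eq hm hn hco hS'r hS'card (Nat.mod_lt _ (by omega))
    rw [hback]
    exact hdyck
  have hNsubr : N ⊆ Finset.range (m + n) := hNsub.trans cyc_subset_range
  have heq : (m + n - 1 + (m + n - t) % (m + n)) % (m + n) = e := by
    by_cases he : e = m + n - 1
    · subst he
      have h1 : t = 0 := by omega
      rw [h1, Nat.sub_zero, Nat.mod_self, Nat.add_zero, Nat.mod_eq_of_lt (by omega)]
    · have h1 : (m + n - t) % (m + n) = e + 1 := by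
        rw [Nat.mod_eq_of_lt (by omega)]
        omega
      rw [h1, show m + n - 1 + (e + 1) = (m + n) + e by omega, Nat.add_mod_left,
        Nat.mod_eq_of_lt (by omega)]
  unfold fwd bwd
  simp only
  rw [show m + n - 1 - e = t from rfl]
  rw [hgoodT, heq, hback]
  have hNe : rot (m + n) ((m + n - t) % (m + n)) (rot (m + n) t (N.erase e)) =
      N.erase e := rot_cancel ((Finset.erase_subset _ _).trans hNsubr) ht
  rw [hNe, Finset.insert_erase heN]

lemma fwd_bwd {m n k : ℕ} (hm : 1 ≤ m) (hn : 1 ≤ n) (hco : Nat.Coprime m n)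
    {y : Finset ℕ × Finset ℕ} (hy : y ∈ Yset m n k) : fwd m n (bwd m n y) = y := by
  obtain ⟨S', M'⟩ := y
  simp only [Yset, Finset.mem_filter, Finset.mem_product, Finset.mem_powerset] at hy
  obtain ⟨⟨hS'r, hM'r⟩, hcard, h0, hlastS, hMsub, hMcard⟩ := hy
  obtain ⟨ht'L, ht'dyck⟩ := goodT_spec hm hn hS'r hcard
  set t' := goodT m n S' with ht'def
  set e := (m + n - 1 + t') % (m + n) with hedef
  have heL : e < m + n := Nat.mod_lt _ (by omega)
  have henotM : e ∉ rot (m + n) t' M' := by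
    intro hc
    rcases mem_rot.1 hc with ⟨x, hxM, hxe⟩
    have hxcor := hMsub hxM
    have hxL : x < m + n - 1 := Finset.mem_range.1 (Finset.mem_filter.1 hxcor).1
    have : x = m + n - 1 := addmod_inj (by omega) (by omega) hxe
    omega
  have hkey : m + n - 1 - e = (m + n - t') % (m + n) := by
    by_cases h : t' = 0
    · have he' : e = m + n - 1 := by
        rw [hedef, h, Nat.add_zero, Nat.mod_eq_of_lt (by omega)]
      rw [he', h, Nat.sub_zero, Nat.mod_self]
      omega
    · have h1 : e = t' - 1 := by
        rw [hedef, mod_sub (by omega) (by omega)]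
        omega
      rw [h1, Nat.mod_eq_of_lt (by omega)]
      omega
  unfold fwd bwd
  simp only
  rw [← hedef, hkey]
  have h1 : rot (m + n) ((m + n - t') % (m + n)) (rot (m + n) t' S') = S' :=
    rot_cancel hS'r (by omega)
  have h2 : (insert e (rot (m + n) t' M')).erase e = rot (m + n) t' M' :=
    Finset.erase_insert henotM
  rw [h2]
  have h3 : rot (m + n) ((m + n - t') % (m + n)) (rot (m + n) t' M') = M' :=
    rot_cancel (hMsub.trans corners_subset_range) (by omega)
  rw [h1, h3]

/-- The rotation bijection between marked Dyck paths with a distinguished cyclic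
corner and marked words. -/
lemma lemA2 (m n k : ℕ) (hm : 1 ≤ m) (hn : 1 ≤ n) (hco : Nat.Coprime m n) :
    (Lset m n k).card = (Yset m n k).card := by
  apply Finset.card_bij' (fun x _ => fwd m n x) (fun y _ => bwd m n y)
  · intro x hx; exact fwd_mem hm hn hx
  · intro y hy; exact bwd_mem hm hn hy
  · intro x hx; exact bwd_fwd hm hn hco hx
  · intro y hy; exact fwd_bwd hm hn hco hy

/-! ### the compression/expansion bijection -/

/-- pairs (C-set, E-set) of compressed interior words. -/
def Xset (m n k : ℕ) : Finset (Finset ℕ × Finset ℕ) :=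
  ((Finset.range (m + n - k - 2)).powerset ×ˢ (Finset.range (m + n - k - 2)).powerset).filter
    fun P => P.1.card = k ∧ P.2.card = m - k - 1 ∧ Disjoint P.1 P.2

/-- expansion position map -/
def gEx (P : Finset ℕ) (j : ℕ) : ℕ := j + 1 + pre P j

/-- compression position map -/
def hCo (M : Finset ℕ) (i : ℕ) : ℕ := i - 1 - pre M i

lemma pre_succ_mem {P : Finset ℕ} {j : ℕ} (h : j ∈ P) : pre P (j + 1) = pre P j + 1 := by
  unfold pre
  rw [Finset.range_add_one, Finset.inter_comm, Finset.insert_inter_of_mem h,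
    Finset.card_insert_of_notMem, Finset.inter_comm]
  simp

lemma pre_le_card {P : Finset ℕ} {j : ℕ} : pre P j ≤ P.card :=
  Finset.card_le_card Finset.inter_subset_left

lemma pre_lt_card {P : Finset ℕ} {j : ℕ} (h : j ∈ P) : pre P j < P.card := by
  apply Finset.card_lt_card
  constructor
  · exact Finset.inter_subset_left
  · intro hsub
    have := hsub h
    simp only [Finset.mem_inter, Finset.mem_range] at this
    omega

lemma gEx_mono {P : Finset ℕ} {j j' : ℕ} (h : j < j') : gEx P j < gEx P j' := by
  have := pre_mono (S := P) (le_of_lt h)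
  unfold gEx
  omega

lemma gEx_mono_le {P : Finset ℕ} {j j' : ℕ} (h : j ≤ j') : gEx P j ≤ gEx P j' := by
  have := pre_mono (S := P) h
  unfold gEx
  omega

lemma gEx_gap {P : Finset ℕ} {j j' : ℕ} (hj : j ∈ P) (h : j < j') :
    gEx P j + 2 ≤ gEx P j' := by
  have h1 := pre_succ_mem hj
  have h2 := pre_mono (S := P) (show j + 1 ≤ j' by omega)
  unfold gEx
  omega

lemma gEx_pos {P : Finset ℕ} {j : ℕ} : 1 ≤ gEx P j := by unfold gEx; omega

/-- structure lemmas for a marked word: `M` marks corners of `S`. -/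
lemma mk_base {S M : Finset ℕ} (hMS : M ⊆ S) (h0 : 0 ∉ S)
    (hnext : ∀ p ∈ M, p + 1 ∉ S) {x : ℕ} (hx : x ∈ S) :
    2 * pre M x + 1 ≤ x := by
  classical
  have hx0 : 0 < x := by
    rcases Nat.eq_zero_or_pos x with h | h
    · subst h; exact absurd hx h0
    · exact h
  set T := insert 0 ((M ∩ Finset.range x) ∪ (M ∩ Finset.range x).image (· + 1)) with hT
  have hsub : T ⊆ Finset.range x := by
    intro y hy
    rw [hT, Finset.mem_insert] at hy
    rcases hy with rfl | hy
    · exact Finset.mem_range.2 hx0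
    · rcases Finset.mem_union.1 hy with hy | hy
      · exact Finset.mem_range.2 (Finset.mem_range.1 (Finset.mem_inter.1 hy).2)
      · rcases Finset.mem_image.1 hy with ⟨p, hp, rfl⟩
        rcases Finset.mem_inter.1 hp with ⟨hpM, hpr⟩
        have hplt := Finset.mem_range.1 hpr
        have : p + 1 ≠ x := fun hc => hnext p hpM (hc ▸ hx)
        exact Finset.mem_range.2 (by omega)
  have hdisj : Disjoint (M ∩ Finset.range x) ((M ∩ Finset.range x).image (· + 1)) := by
    rw [Finset.disjoint_left]
    intro a ha hb
    rcases Finset.mem_image.1 hb with ⟨p, hp, hpe⟩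
    have haS : a ∈ S := hMS (Finset.mem_inter.1 ha).1
    have := hnext p (Finset.mem_inter.1 hp).1
    rw [hpe] at this
    exact this haS
  have h0nm : (0 : ℕ) ∉ (M ∩ Finset.range x) ∪ (M ∩ Finset.range x).image (· + 1) := by
    intro hc
    rcases Finset.mem_union.1 hc with hc | hc
    · exact h0 (hMS (Finset.mem_inter.1 hc).1)
    · rcases Finset.mem_image.1 hc with ⟨p, _, hpe⟩
      omega
  have hcardT : T.card = 2 * pre M x + 1 := by
    rw [hT, Finset.card_insert_of_notMem h0nm, Finset.card_union_of_disjoint hdisj,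
      Finset.card_image_of_injective _ (fun a b h => by omega)]
    unfold pre
    ring
  have := Finset.card_le_card hsub
  rw [hcardT, Finset.card_range] at this
  exact this

lemma mk_step {S M : Finset ℕ} (hMS : M ⊆ S) (hnext : ∀ p ∈ M, p + 1 ∉ S)
    {x y : ℕ} (hy : y ∈ S) (hxy : x < y) :
    2 * (M ∩ Finset.Ico x y).card ≤ y - x := by
  classical
  set T := (M ∩ Finset.Ico x y) ∪ (M ∩ Finset.Ico x y).image (· + 1) with hT
  have hsub : T ⊆ Finset.Ico x y := by
    intro a ha
    rw [hT, Finset.mem_union] at ha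
    rcases ha with ha | ha
    · exact (Finset.mem_inter.1 ha).2
    · rcases Finset.mem_image.1 ha with ⟨p, hp, rfl⟩
      rcases Finset.mem_Ico.1 (Finset.mem_inter.1 hp).2 with ⟨h1, h2⟩
      have : p + 1 ≠ y := fun hc => hnext p (Finset.mem_inter.1 hp).1 (hc ▸ hy)
      exact Finset.mem_Ico.2 ⟨by omega, by omega⟩
  have hdisj : Disjoint (M ∩ Finset.Ico x y) ((M ∩ Finset.Ico x y).image (· + 1)) := by
    rw [Finset.disjoint_left]
    intro a ha hb
    rcases Finset.mem_image.1 hb with ⟨p, hp, hpe⟩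
    have haS : a ∈ S := hMS (Finset.mem_inter.1 ha).1
    have := hnext p (Finset.mem_inter.1 hp).1
    rw [hpe] at this
    exact this haS
  have hcardT : T.card = 2 * (M ∩ Finset.Ico x y).card := by
    rw [hT, Finset.card_union_of_disjoint hdisj,
      Finset.card_image_of_injective _ (fun a b h => by omega)]
    ring
  have := Finset.card_le_card hsub
  rw [hcardT, Nat.card_Ico] at this
  exact this

lemma hCo_mono {S M : Finset ℕ} (hMS : M ⊆ S) (h0 : 0 ∉ S)
    (hnext : ∀ p ∈ M, p + 1 ∉ S) {x y : ℕ} (hx : x ∈ S) (hy : y ∈ S) (hxy : x < y) :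
    hCo M x < hCo M y := by
  have h1 := mk_base hMS h0 hnext hx
  have h2 := mk_step hMS hnext hy hxy
  have h3 := pre_add (S := M) (le_of_lt hxy)
  unfold hCo
  omega

lemma corners_subset_range' {m n : ℕ} {S : Finset ℕ} :
    corners m n S ⊆ Finset.range (m + n - 1) := Finset.filter_subset _ _

/-- compression map on pairs -/
def psiF (L : ℕ) (y : Finset ℕ × Finset ℕ) : Finset ℕ × Finset ℕ :=
  (y.2.image (hCo y.2), ((y.1 \ y.2).erase (L - 1)).image (hCo y.2))

/-- expansion map on pairs -/
def xiF (L : ℕ) (x : Finset ℕ × Finset ℕ) : Finset ℕ × Finset ℕ :=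
  (insert (L - 1) ((x.1 ∪ x.2).image (gEx x.1)), x.1.image (gEx x.1))

lemma image_rank {A D : Finset ℕ} {f : ℕ → ℕ} (hA : A ⊆ D) {x : ℕ}
    (hiff : ∀ a ∈ D, (f a < f x ↔ a < x)) :
    A.image f ∩ Finset.range (f x) = (A ∩ Finset.range x).image f := by
  ext y
  simp only [Finset.mem_inter, Finset.mem_image, Finset.mem_range]
  constructor
  · rintro ⟨⟨a, ha, rfl⟩, hlt⟩
    exact ⟨a, ⟨ha, (hiff a (hA ha)).1 hlt⟩, rfl⟩
  · rintro ⟨a, ⟨ha, hlt⟩, rfl⟩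
    exact ⟨⟨a, ha, rfl⟩, (hiff a (hA ha)).2 hlt⟩

lemma psi_mem {m n k : ℕ} (hm : 1 ≤ m) (hn : 1 ≤ n) {y : Finset ℕ × Finset ℕ}
    (hy : y ∈ Yset m n k) : psiF (m + n) y ∈ Xset m n k := by
  obtain ⟨S, M⟩ := y
  simp only [Yset, Finset.mem_filter, Finset.mem_product, Finset.mem_powerset] at hy
  obtain ⟨⟨hSr, hMr⟩, hcard, h0, hlast, hMsub, hMcard⟩ := hy
  have hMS : M ⊆ S := hMsub.trans corners_subset
  have hnext : ∀ p ∈ M, p + 1 ∉ S := fun p hp => (Finset.mem_filter.1 (hMsub hp)).2.2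
  have hMlt : ∀ p ∈ M, p < m + n - 1 := fun p hp =>
    Finset.mem_range.1 (corners_subset_range' (hMsub hp))
  have hkm := corners_card_le_left hlast hcard
  have hkn := corners_card_le_right h0 hSr hcard hn
  have hkM := Finset.card_le_card hMsub
  have hmono := fun {x y} hx hy hxy => hCo_mono hMS h0 hnext (x := x) (y := y) hx hy hxy
  have hinj : Set.InjOn (hCo M) S := by
    intro a ha b hb hab
    rcases Nat.lt_trichotomy a b with h | h | h
    · exact absurd hab (Nat.ne_of_lt (hmono ha hb h))
    · exact h
    · exact absurd hab.symm (Nat.ne_of_lt (hmono hb ha h))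
  have hWeq : hCo M (m + n - 1) = m + n - k - 2 := by
    unfold hCo
    have : pre M (m + n - 1) = k := by
      unfold pre
      rw [Finset.inter_eq_left.2 (hMsub.trans corners_subset_range'), hMcard]
    rw [this]
    omega
  have hltW : ∀ x ∈ S, x ≠ m + n - 1 → hCo M x < m + n - k - 2 := by
    intro x hx hne
    have hxlt : x < m + n := Finset.mem_range.1 (hSr hx)
    have := hmono hx hlast (by omega)
    omega
  simp only [psiF, Xset, Finset.mem_filter, Finset.mem_product, Finset.mem_powerset]
  refine ⟨⟨?_, ?_⟩, ?_, ?_, ?_⟩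
  · intro z hz
    rcases Finset.mem_image.1 hz with ⟨p, hp, rfl⟩
    exact Finset.mem_range.2 (hltW p (hMS hp) (by have := hMlt p hp; omega))
  · intro z hz
    rcases Finset.mem_image.1 hz with ⟨x, hx, rfl⟩
    have hx1 := Finset.mem_of_mem_erase hx
    have hx2 := Finset.ne_of_mem_erase hx
    exact Finset.mem_range.2 (hltW x (Finset.mem_sdiff.1 hx1).1 hx2)
  · rw [Finset.card_image_of_injOn (hinj.mono (by exact_mod_cast hMS)), hMcard]
  · rw [Finset.card_image_of_injOn (hinj.mono ?_)]
    · rw [Finset.card_erase_of_mem, Finset.card_sdiff_of_subset hMS, hcard, hMcard]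
      exact Finset.mem_sdiff.2 ⟨hlast, fun hc => by have := hMlt _ hc; omega⟩
    · intro x hx
      exact (Finset.mem_sdiff.1 (Finset.mem_of_mem_erase (by exact_mod_cast hx))).1
  · rw [Finset.disjoint_left]
    intro z hz1 hz2
    rcases Finset.mem_image.1 hz1 with ⟨p, hp, rfl⟩
    rcases Finset.mem_image.1 hz2 with ⟨x, hx, he⟩
    have hxS : x ∈ S := (Finset.mem_sdiff.1 (Finset.mem_of_mem_erase hx)).1
    have : x = p := hinj hxS (hMS hp) he
    subst this
    exact (Finset.mem_sdiff.1 (Finset.mem_of_mem_erase hx)).2 hp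

lemma xi_mem {m n k : ℕ} (hm : 1 ≤ m) (hn : 1 ≤ n) (hkm : k + 1 ≤ m) (hkn : k + 1 ≤ n)
    {x : Finset ℕ × Finset ℕ} (hx : x ∈ Xset m n k) : xiF (m + n) x ∈ Yset m n k := by
  obtain ⟨P, Q⟩ := x
  simp only [Xset, Finset.mem_filter, Finset.mem_product, Finset.mem_powerset] at hx
  obtain ⟨⟨hPr, hQr⟩, hPc, hQc, hdisj⟩ := hx
  have hPlt : ∀ j ∈ P, j < m + n - k - 2 := fun j hj => Finset.mem_range.1 (hPr hj)
  have hQlt : ∀ j ∈ Q, j < m + n - k - 2 := fun j hj => Finset.mem_range.1 (hQr hj)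
  have hgle : ∀ j, j < m + n - k - 2 → gEx P j ≤ m + n - 2 := by
    intro j hj
    have h1 : pre P j ≤ k := hPc ▸ pre_le_card
    unfold gEx
    omega
  have hglep : ∀ j ∈ P, gEx P j ≤ m + n - 3 := by
    intro j hj
    have h1 : pre P j < k := hPc ▸ pre_lt_card hj
    have h2 := hPlt j hj
    unfold gEx
    omega
  have hginj : Set.InjOn (gEx P) ↑(P ∪ Q) := by
    intro a _ b _ hab
    rcases Nat.lt_trichotomy a b with h | h | h
    · exact absurd hab (Nat.ne_of_lt (gEx_mono h))
    · exact h
    · exact absurd hab.symm (Nat.ne_of_lt (gEx_mono h))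
  have hlastni : m + n - 1 ∉ (P ∪ Q).image (gEx P) := by
    intro hc
    rcases Finset.mem_image.1 hc with ⟨j, hj, he⟩
    have : j < m + n - k - 2 := by
      rcases Finset.mem_union.1 hj with h | h
      · exact hPlt j h
      · exact hQlt j h
    have := hgle j this
    omega
  simp only [xiF, Yset, Finset.mem_filter, Finset.mem_product, Finset.mem_powerset]
  refine ⟨⟨?_, ?_⟩, ?_, ?_, ?_, ?_, ?_⟩
  · intro z hz
    rcases Finset.mem_insert.1 hz with rfl | hz
    · exact Finset.mem_range.2 (by omega)
    · rcases Finset.mem_image.1 hz with ⟨j, hj, rfl⟩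
      have : j < m + n - k - 2 := by
        rcases Finset.mem_union.1 hj with h | h
        · exact hPlt j h
        · exact hQlt j h
      exact Finset.mem_range.2 (by have := hgle j this; omega)
  · intro z hz
    rcases Finset.mem_image.1 hz with ⟨j, hj, rfl⟩
    exact Finset.mem_range.2 (by have := hglep j hj; have := hPlt j hj; omega)
  · rw [Finset.card_insert_of_notMem hlastni, Finset.card_image_of_injOn hginj,
      Finset.card_union_of_disjoint hdisj, hPc, hQc]
    omega
  · intro hc
    rcases Finset.mem_insert.1 hc with h | h
    · omega
    · rcases Finset.mem_image.1 h with ⟨j, _, he⟩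
      have := gEx_pos (P := P) (j := j)
      omega
  · exact Finset.mem_insert_self _ _
  · -- marks are corners
    intro z hz
    rcases Finset.mem_image.1 hz with ⟨j, hj, rfl⟩
    have hj1 := hPlt j hj
    have hj2 := hglep j hj
    refine Finset.mem_filter.2 ⟨Finset.mem_range.2 (by omega), ?_, ?_⟩
    · exact Finset.mem_insert.2 (Or.inr (Finset.mem_image.2
        ⟨j, Finset.mem_union_left _ hj, rfl⟩))
    · intro hc
      rcases Finset.mem_insert.1 hc with h | h
      · omega
      · rcases Finset.mem_image.1 h with ⟨j', hj', he⟩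
        rcases Nat.lt_trichotomy j' j with h' | h' | h'
        · have := gEx_mono (P := P) h'
          omega
        · subst h'
          omega
        · have := gEx_gap hj h'
          omega
  · rw [Finset.card_image_of_injOn (hginj.mono (by
      intro a ha
      exact Finset.mem_coe.2 (Finset.mem_union_left _ (Finset.mem_coe.1 ha)))), hPc]

lemma gEx_lt_iff {P : Finset ℕ} {a j : ℕ} : gEx P a < gEx P j ↔ a < j := by
  constructor
  · intro h
    by_contra hc
    have := gEx_mono_le (P := P) (show j ≤ a by omega)
    omega
  · exact gEx_mono

lemma rt1 {m n k : ℕ} (hm : 1 ≤ m) (hn : 1 ≤ n) {x : Finset ℕ × Finset ℕ}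
    (hx : x ∈ Xset m n k) : psiF (m + n) (xiF (m + n) x) = x := by
  obtain ⟨P, Q⟩ := x
  simp only [Xset, Finset.mem_filter, Finset.mem_product, Finset.mem_powerset] at hx
  obtain ⟨⟨hPr, hQr⟩, hPc, hQc, hdisj⟩ := hx
  have hPlt : ∀ j ∈ P, j < m + n - k - 2 := fun j hj => Finset.mem_range.1 (hPr hj)
  have hQlt : ∀ j ∈ Q, j < m + n - k - 2 := fun j hj => Finset.mem_range.1 (hQr hj)
  have hgle : ∀ j, j < m + n - k - 2 → gEx P j ≤ m + n - 2 := by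
    intro j hj
    have h1 : pre P j ≤ k := hPc ▸ pre_le_card
    unfold gEx
    omega
  have hginj : Set.InjOn (gEx P) ↑(P ∪ Q) := fun a _ b _ hab => by
    rcases Nat.lt_trichotomy a b with h | h | h
    · exact absurd hab (Nat.ne_of_lt (gEx_mono h))
    · exact h
    · exact absurd hab.symm (Nat.ne_of_lt (gEx_mono h))
  set M := P.image (gEx P) with hM
  -- the key identity
  have keyA : ∀ j ∈ P ∪ Q, hCo M (gEx P j) = j := by
    intro j hj
    have h1 : M ∩ Finset.range (gEx P j) = (P ∩ Finset.range j).image (gEx P) := by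
      rw [hM]
      exact image_rank (le_refl P) (fun a _ => gEx_lt_iff)
    have h2 : pre M (gEx P j) = pre P j := by
      unfold pre
      rw [h1, Finset.card_image_of_injOn (hginj.mono (by
        intro a ha
        exact Finset.mem_coe.2 (Finset.mem_union_left _
          (Finset.mem_inter.1 (Finset.mem_coe.1 ha)).1)))]
    unfold hCo
    rw [h2]
    unfold gEx
    omega
  have hMQdisj : ∀ z ∈ Q.image (gEx P), z ∉ M := by
    intro z hz hzM
    rcases Finset.mem_image.1 hz with ⟨a, ha, rfl⟩
    rcases Finset.mem_image.1 hzM with ⟨b, hb, he⟩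
    have : b = a := hginj (Finset.mem_coe.2 (Finset.mem_union_left _ hb))
      (Finset.mem_coe.2 (Finset.mem_union_right _ ha)) he
    subst this
    exact Finset.disjoint_left.1 hdisj hb ha
  have hlastnQ : m + n - 1 ∉ Q.image (gEx P) := by
    intro hc
    rcases Finset.mem_image.1 hc with ⟨j, hj, he⟩
    have := hgle j (hQlt j hj)
    omega
  have hlastnM : m + n - 1 ∉ M := by
    intro hc
    rcases Finset.mem_image.1 hc with ⟨j, hj, he⟩
    have := hgle j (hPlt j hj)
    omega
  have hsd : (insert (m + n - 1) ((P ∪ Q).image (gEx P))) \ M =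
      insert (m + n - 1) (Q.image (gEx P)) := by
    ext z
    simp only [Finset.mem_sdiff, Finset.mem_insert, Finset.mem_image, Finset.mem_union]
    constructor
    · rintro ⟨rfl | ⟨j, hj, rfl⟩, hzM⟩
      · exact Or.inl rfl
      · rcases hj with hj | hj
        · exact absurd (Finset.mem_image.2 ⟨j, hj, rfl⟩) hzM
        · exact Or.inr ⟨j, hj, rfl⟩
    · rintro (rfl | ⟨j, hj, rfl⟩)
      · exact ⟨Or.inl rfl, hlastnM⟩
      · exact ⟨Or.inr ⟨j, Or.inr hj, rfl⟩,
          hMQdisj _ (Finset.mem_image.2 ⟨j, hj, rfl⟩)⟩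
  simp only [psiF, xiF]
  rw [Prod.ext_iff]
  constructor
  · -- first component equals P
    simp only [hM, Finset.image_image]
    have h4 := Finset.image_congr (f := hCo M ∘ gEx P) (g := id) (s := P)
      (fun j hj => keyA j (Finset.mem_union_left _ hj))
    rw [Finset.image_id] at h4
    exact h4
  · simp only
    rw [hsd, Finset.erase_insert hlastnQ, Finset.image_image]
    have h4 := Finset.image_congr (f := hCo M ∘ gEx P) (g := id) (s := Q)
      (fun j hj => keyA j (Finset.mem_union_right _ hj))
    rw [Finset.image_id] at h4
    exact h4

lemma rt2 {m n k : ℕ} (hm : 1 ≤ m) (hn : 1 ≤ n) {y : Finset ℕ × Finset ℕ}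
    (hy : y ∈ Yset m n k) : xiF (m + n) (psiF (m + n) y) = y := by
  obtain ⟨S, M⟩ := y
  simp only [Yset, Finset.mem_filter, Finset.mem_product, Finset.mem_powerset] at hy
  obtain ⟨⟨hSr, hMr⟩, hcard, h0, hlast, hMsub, hMcard⟩ := hy
  have hMS : M ⊆ S := hMsub.trans corners_subset
  have hnext : ∀ p ∈ M, p + 1 ∉ S := fun p hp => (Finset.mem_filter.1 (hMsub hp)).2.2
  have hMlt : ∀ p ∈ M, p < m + n - 1 := fun p hp =>
    Finset.mem_range.1 (corners_subset_range' (hMsub hp))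
  have hmono := fun {a b} ha hb hab => hCo_mono hMS h0 hnext (x := a) (y := b) ha hb hab
  have hinj : Set.InjOn (hCo M) S := fun a ha b hb hab => by
    rcases Nat.lt_trichotomy a b with h | h | h
    · exact absurd hab (Nat.ne_of_lt (hmono ha hb h))
    · exact h
    · exact absurd hab.symm (Nat.ne_of_lt (hmono hb ha h))
  set P := M.image (hCo M) with hP
  -- key identity
  have keyB : ∀ x ∈ S, gEx P (hCo M x) = x := by
    intro x hx
    have hiff : ∀ a ∈ S, (hCo M a < hCo M x ↔ a < x) := by
      intro a ha
      constructor
      · intro h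
        by_contra hc
        rcases Nat.lt_or_ge x a with h' | h'
        · exact absurd h (by have := hmono hx ha h'; omega)
        · have : a = x := by omega
          subst this
          omega
      · exact hmono ha hx
    have h1 : P ∩ Finset.range (hCo M x) = (M ∩ Finset.range x).image (hCo M) := by
      rw [hP]
      exact image_rank hMS hiff
    have h2 : pre P (hCo M x) = pre M x := by
      unfold pre
      rw [h1, Finset.card_image_of_injOn (hinj.mono (by
        intro a ha
        exact Finset.mem_coe.2 (hMS (Finset.mem_inter.1 (Finset.mem_coe.1 ha)).1)))]
    have h3 := mk_base hMS h0 hnext hx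
    unfold gEx
    rw [h2]
    unfold hCo
    omega
  have hunion : M ∪ (S \ M).erase (m + n - 1) = S.erase (m + n - 1) := by
    ext z
    simp only [Finset.mem_union, Finset.mem_erase, Finset.mem_sdiff]
    constructor
    · rintro (hz | ⟨hne, hz, _⟩)
      · exact ⟨by have := hMlt z hz; omega, hMS hz⟩
      · exact ⟨hne, hz⟩
    · rintro ⟨hne, hz⟩
      by_cases hzM : z ∈ M
      · exact Or.inl hzM
      · exact Or.inr ⟨hne, hz, hzM⟩
  simp only [psiF, xiF]
  rw [Prod.ext_iff]
  constructor
  · simp only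
    rw [← Finset.image_union, hunion, Finset.image_image]
    have h4 := Finset.image_congr (f := gEx P ∘ hCo M) (g := id)
      (s := S.erase (m + n - 1))
      (fun x hx => keyB x (Finset.mem_of_mem_erase hx))
    rw [Finset.image_id] at h4
    rw [h4, Finset.insert_erase hlast]
  · simp only
    rw [Finset.image_image]
    have h4 := Finset.image_congr (f := gEx P ∘ hCo M) (g := id) (s := M)
      (fun x hx => keyB x (hMS hx))
    rw [Finset.image_id] at h4
    exact h4

lemma lemB (m n k : ℕ) (hm : 1 ≤ m) (hn : 1 ≤ n) (hkm : k + 1 ≤ m) (hkn : k + 1 ≤ n) :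
    (Yset m n k).card = (Xset m n k).card := by
  apply Finset.card_bij' (fun y _ => psiF (m + n) y) (fun x _ => xiF (m + n) x)
  · intro y hy; exact psi_mem hm hn hy
  · intro x hx; exact xi_mem hm hn hkm hkn hx
  · intro y hy; exact rt2 hm hn hy
  · intro x hx; exact rt1 hm hn hx

lemma Xset_card (m n k : ℕ) :
    (Xset m n k).card = (m + n - k - 2).choose k *
      ((m + n - k - 2) - k).choose (m - k - 1) := by
  classical
  have hmap : ∀ P ∈ Xset m n k, P.1 ∈ (Finset.range (m + n - k - 2)).powersetCard k := by
    rintro ⟨P, Q⟩ hP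
    simp only [Xset, Finset.mem_filter, Finset.mem_product, Finset.mem_powerset] at hP
    exact Finset.mem_powersetCard.2 ⟨hP.1.1, hP.2.1⟩
  rw [Finset.card_eq_sum_card_fiberwise hmap]
  rw [Finset.sum_congr rfl
    (g := fun _ => ((m + n - k - 2) - k).choose (m - k - 1)) ?_, Finset.sum_const,
    smul_eq_mul, Finset.card_powersetCard, Finset.card_range]
  intro P hP
  rcases Finset.mem_powersetCard.1 hP with ⟨hPr, hPc⟩
  have hcs : (Finset.range (m + n - k - 2) \ P).card = (m + n - k - 2) - k := by
    rw [Finset.card_sdiff_of_subset hPr, Finset.card_range, hPc]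
  rw [← hcs, ← Finset.card_powersetCard (m - k - 1) (Finset.range (m + n - k - 2) \ P)]
  apply Finset.card_bij (fun x _ => x.2)
  · rintro ⟨P', Q⟩ hx
    simp only [Finset.mem_filter] at hx
    obtain ⟨hmem, hfst⟩ := hx
    obtain rfl : P' = P := hfst
    simp only [Xset, Finset.mem_filter, Finset.mem_product, Finset.mem_powerset] at hmem
    exact Finset.mem_powersetCard.2
      ⟨Finset.subset_sdiff.2 ⟨hmem.1.2, hmem.2.2.2.symm⟩, hmem.2.2.1⟩
  · rintro ⟨P₁, Q₁⟩ h1 ⟨P₂, Q₂⟩ h2 he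
    simp only [Finset.mem_filter] at h1 h2
    simp only at he
    rw [Prod.ext_iff]
    exact ⟨h1.2.trans h2.2.symm, he⟩
  · intro Q hQ
    rcases Finset.mem_powersetCard.1 hQ with ⟨hQsub, hQc⟩
    rcases Finset.subset_sdiff.1 hQsub with ⟨hQr, hQd⟩
    refine ⟨(P, Q), Finset.mem_filter.2 ⟨?_, rfl⟩, rfl⟩
    simp only [Xset, Finset.mem_filter, Finset.mem_product, Finset.mem_powerset]
    exact ⟨⟨hPr, hQr⟩, hPc, hQc, hQd.symm⟩

/-- the target quantity -/
noncomputable def Tq (m n k : ℕ) : ℚ :=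
  (Nat.factorial (m + n - k - 1) : ℚ) /
    ((m : ℚ) * (n : ℚ) * (Nat.factorial (n - k - 1) : ℚ) *
      (Nat.factorial (m - k - 1) : ℚ) * (Nat.factorial k : ℚ))

set_option maxHeartbeats 2000000 in
lemma idQ_interior (A B k : ℕ) :
    (((A + k + 2) + (B + k + 2) - k - 2).choose k *
      ((((A + k + 2) + (B + k + 2) - k - 2) - k).choose ((A + k + 2) - k - 1)) : ℚ) =
    ((k : ℚ) + 1) * (Tq (A + k + 2) (B + k + 2) k + Tq (A + k + 2) (B + k + 2) (k + 1)) := by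
  unfold Tq
  rw [show (A + k + 2) + (B + k + 2) - k - 2 = A + B + k + 2 by omega]
  rw [show A + B + k + 2 - k = A + B + 2 by omega]
  rw [show (A + k + 2) - k - 1 = A + 1 by omega]
  rw [show (A + k + 2) + (B + k + 2) - k - 1 = A + B + k + 3 by omega]
  rw [show (B + k + 2) - k - 1 = B + 1 by omega]
  rw [show (A + k + 2) + (B + k + 2) - (k + 1) - 1 = A + B + k + 2 by omega]
  rw [show (B + k + 2) - (k + 1) - 1 = B by omega]
  rw [show (A + k + 2) - (k + 1) - 1 = A by omega]
  rw [Nat.cast_choose ℚ (show k ≤ A + B + k + 2 by omega)]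
  rw [Nat.cast_choose ℚ (show A + 1 ≤ A + B + 2 by omega)]
  rw [show A + B + k + 2 - k = A + B + 2 by omega]
  rw [show A + B + 2 - (A + 1) = B + 1 by omega]
  rw [show A + B + k + 3 = (A + B + k + 2) + 1 by omega, Nat.factorial_succ (A + B + k + 2)]
  rw [show Nat.factorial (A + 1) = (A + 1) * Nat.factorial A from Nat.factorial_succ A]
  rw [show Nat.factorial (B + 1) = (B + 1) * Nat.factorial B from Nat.factorial_succ B]
  rw [show Nat.factorial (k + 1) = (k + 1) * Nat.factorial k from Nat.factorial_succ k]
  have h1 : ((Nat.factorial (A + B + k + 2)) : ℚ) ≠ 0 := Nat.cast_ne_zero.2 (Nat.factorial_ne_zero _)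
  have h2 : ((Nat.factorial (A + B + 2)) : ℚ) ≠ 0 := Nat.cast_ne_zero.2 (Nat.factorial_ne_zero _)
  have h3 : ((Nat.factorial A) : ℚ) ≠ 0 := Nat.cast_ne_zero.2 (Nat.factorial_ne_zero _)
  have h4 : ((Nat.factorial B) : ℚ) ≠ 0 := Nat.cast_ne_zero.2 (Nat.factorial_ne_zero _)
  have h5 : ((Nat.factorial k) : ℚ) ≠ 0 := Nat.cast_ne_zero.2 (Nat.factorial_ne_zero _)
  push_cast
  generalize ((Nat.factorial (A + B + k + 2)) : ℚ) = F at *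
  generalize ((Nat.factorial (A + B + 2)) : ℚ) = G at *
  generalize ((Nat.factorial A) : ℚ) = FA at *
  generalize ((Nat.factorial B) : ℚ) = FB at *
  generalize ((Nat.factorial k) : ℚ) = FK at *
  have h6 : ((A : ℚ) + k + 2) ≠ 0 := by positivity
  have h7 : ((B : ℚ) + k + 2) ≠ 0 := by positivity
  have h8 : ((A : ℚ) + 1) ≠ 0 := by positivity
  have h9 : ((B : ℚ) + 1) ≠ 0 := by positivity
  have h10 : ((k : ℚ) + 1) ≠ 0 := by positivity
  field_simp
  ring

set_option maxHeartbeats 2000000 in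
lemma idQ_boundary_n (A k : ℕ) :
    (((A + k + 1) + (k + 1) - k - 2).choose k *
      ((((A + k + 1) + (k + 1) - k - 2) - k).choose ((A + k + 1) - k - 1)) : ℚ) =
    ((k : ℚ) + 1) * Tq (A + k + 1) (k + 1) k := by
  unfold Tq
  rw [show (A + k + 1) + (k + 1) - k - 2 = A + k by omega]
  rw [show A + k - k = A by omega]
  rw [show (A + k + 1) - k - 1 = A by omega]
  rw [show (A + k + 1) + (k + 1) - k - 1 = A + k + 1 by omega]
  rw [show (k + 1) - k - 1 = 0 by omega]
  rw [Nat.choose_self, Nat.cast_choose ℚ (show k ≤ A + k by omega)]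
  rw [show A + k - k = A by omega]
  rw [show A + k + 1 = (A + k) + 1 by omega, Nat.factorial_succ (A + k)]
  have h1 : ((Nat.factorial (A + k)) : ℚ) ≠ 0 := Nat.cast_ne_zero.2 (Nat.factorial_ne_zero _)
  have h3 : ((Nat.factorial A) : ℚ) ≠ 0 := Nat.cast_ne_zero.2 (Nat.factorial_ne_zero _)
  have h5 : ((Nat.factorial k) : ℚ) ≠ 0 := Nat.cast_ne_zero.2 (Nat.factorial_ne_zero _)
  rw [Nat.factorial_zero]
  push_cast
  generalize ((Nat.factorial (A + k)) : ℚ) = F at *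
  generalize ((Nat.factorial A) : ℚ) = FA at *
  generalize ((Nat.factorial k) : ℚ) = FK at *
  have h6 : ((A : ℚ) + k + 1) ≠ 0 := by positivity
  have h10 : ((k : ℚ) + 1) ≠ 0 := by positivity
  field_simp

set_option maxHeartbeats 2000000 in
lemma idQ_boundary_m (B k : ℕ) :
    (((k + 1) + (B + k + 1) - k - 2).choose k *
      ((((k + 1) + (B + k + 1) - k - 2) - k).choose ((k + 1) - k - 1)) : ℚ) =
    ((k : ℚ) + 1) * Tq (k + 1) (B + k + 1) k := by
  unfold Tq
  rw [show (k + 1) + (B + k + 1) - k - 2 = B + k by omega]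
  rw [show B + k - k = B by omega]
  rw [show (k + 1) - k - 1 = 0 by omega]
  rw [show (k + 1) + (B + k + 1) - k - 1 = B + k + 1 by omega]
  rw [show (B + k + 1) - k - 1 = B by omega]
  rw [Nat.choose_zero_right, Nat.cast_choose ℚ (show k ≤ B + k by omega)]
  rw [show B + k - k = B by omega]
  rw [show B + k + 1 = (B + k) + 1 by omega, Nat.factorial_succ (B + k)]
  have h1 : ((Nat.factorial (B + k)) : ℚ) ≠ 0 := Nat.cast_ne_zero.2 (Nat.factorial_ne_zero _)
  have h3 : ((Nat.factorial B) : ℚ) ≠ 0 := Nat.cast_ne_zero.2 (Nat.factorial_ne_zero _)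
  have h5 : ((Nat.factorial k) : ℚ) ≠ 0 := Nat.cast_ne_zero.2 (Nat.factorial_ne_zero _)
  rw [Nat.factorial_zero]
  push_cast
  generalize ((Nat.factorial (B + k)) : ℚ) = F at *
  generalize ((Nat.factorial B) : ℚ) = FB at *
  generalize ((Nat.factorial k) : ℚ) = FK at *
  have h6 : ((B : ℚ) + k + 1) ≠ 0 := by positivity
  have h10 : ((k : ℚ) + 1) ≠ 0 := by positivity
  field_simp

/-- the master recursion -/
lemma key_eq (m n k : ℕ) (hm : 1 ≤ m) (hn : 1 ≤ n) (hco : Nat.Coprime m n)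
    (hkm : k + 1 ≤ m) (hkn : k + 1 ≤ n) :
    (k + 1) * ((Aset m n k).card + (Aset m n (k + 1)).card) =
      (m + n - k - 2).choose k * ((m + n - k - 2) - k).choose (m - k - 1) := by
  rw [← Lset_card m n k hm hn, lemA2 m n k hm hn hco, lemB m n k hm hn hkm hkn,
    Xset_card]

lemma main_aux (m n : ℕ) (hm : 1 ≤ m) (hn : 1 ≤ n) (hco : Nat.Coprime m n) :
    ∀ d k, k ≤ n - 1 → k ≤ m - 1 → n - 1 - k ≤ d →
      ((Aset m n k).card : ℚ) = Tq m n k := by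
  intro d
  induction d with
  | zero =>
    intro k hkn hkm hd
    have hk : k = n - 1 := by omega
    have hA1 : (Aset m n (k + 1)).card = 0 :=
      Aset_empty m n (k + 1) hm hn (Or.inl (by omega))
    have hkey := key_eq m n k hm hn hco (by omega) (by omega)
    rw [hA1, Nat.add_zero] at hkey
    have hkeyQ : ((k : ℚ) + 1) * ((Aset m n k).card : ℚ) =
        ((m + n - k - 2).choose k * ((m + n - k - 2) - k).choose (m - k - 1) : ℕ) := by
      exact_mod_cast congrArg (Nat.cast (R := ℚ)) hkey
    obtain ⟨A, hA⟩ : ∃ A, m = A + k + 1 := ⟨m - k - 1, by omega⟩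
    have hn' : n = k + 1 := by omega
    have hid := idQ_boundary_n A k
    rw [← hA, ← hn'] at hid
    have h10 : ((k : ℚ) + 1) ≠ 0 := by positivity
    have := hkeyQ.trans (by push_cast; exact_mod_cast hid)
    push_cast at this
    exact mul_left_cancel₀ h10 this
  | succ d ih =>
    intro k hkn hkm hd
    by_cases hbn : k = n - 1
    · -- boundary on n side
      have hA1 : (Aset m n (k + 1)).card = 0 :=
        Aset_empty m n (k + 1) hm hn (Or.inl (by omega))
      have hkey := key_eq m n k hm hn hco (by omega) (by omega)
      rw [hA1, Nat.add_zero] at hkey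
      have hkeyQ : ((k : ℚ) + 1) * ((Aset m n k).card : ℚ) =
          ((m + n - k - 2).choose k * ((m + n - k - 2) - k).choose (m - k - 1) : ℕ) := by
        exact_mod_cast congrArg (Nat.cast (R := ℚ)) hkey
      obtain ⟨A, hA⟩ : ∃ A, m = A + k + 1 := ⟨m - k - 1, by omega⟩
      have hn' : n = k + 1 := by omega
      have hid := idQ_boundary_n A k
      rw [← hA, ← hn'] at hid
      have h10 : ((k : ℚ) + 1) ≠ 0 := by positivity
      have := hkeyQ.trans (by push_cast; exact_mod_cast hid)
      push_cast at this
      exact mul_left_cancel₀ h10 this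
    · by_cases hbm : k = m - 1
      · -- boundary on m side
        have hA1 : (Aset m n (k + 1)).card = 0 :=
          Aset_empty m n (k + 1) hm hn (Or.inr (by omega))
        have hkey := key_eq m n k hm hn hco (by omega) (by omega)
        rw [hA1, Nat.add_zero] at hkey
        have hkeyQ : ((k : ℚ) + 1) * ((Aset m n k).card : ℚ) =
            ((m + n - k - 2).choose k * ((m + n - k - 2) - k).choose (m - k - 1) : ℕ) := by
          exact_mod_cast congrArg (Nat.cast (R := ℚ)) hkey
        obtain ⟨B, hB⟩ : ∃ B, n = B + k + 1 := ⟨n - k - 1, by omega⟩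
        have hm' : m = k + 1 := by omega
        have hid := idQ_boundary_m B k
        rw [← hB, ← hm'] at hid
        have h10 : ((k : ℚ) + 1) ≠ 0 := by positivity
        have := hkeyQ.trans (by push_cast; exact_mod_cast hid)
        push_cast at this
        exact mul_left_cancel₀ h10 this
      · -- interior
        have hIH := ih (k + 1) (by omega) (by omega) (by omega)
        have hkey := key_eq m n k hm hn hco (by omega) (by omega)
        have hkeyQ : ((k : ℚ) + 1) * (((Aset m n k).card : ℚ) + ((Aset m n (k + 1)).card : ℚ)) =
            ((m + n - k - 2).choose k * ((m + n - k - 2) - k).choose (m - k - 1) : ℕ) := by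
          exact_mod_cast congrArg (Nat.cast (R := ℚ)) hkey
        obtain ⟨A, hA⟩ : ∃ A, m = A + k + 2 := ⟨m - k - 2, by omega⟩
        obtain ⟨B, hB⟩ : ∃ B, n = B + k + 2 := ⟨n - k - 2, by omega⟩
        have hid := idQ_interior A B k
        rw [← hA, ← hB] at hid
        have h10 : ((k : ℚ) + 1) ≠ 0 := by positivity
        rw [hIH] at hkeyQ
        have h2 : ((k : ℚ) + 1) * (((Aset m n k).card : ℚ) + Tq m n (k + 1)) =
            ((k : ℚ) + 1) * (Tq m n k + Tq m n (k + 1)) := by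
          rw [hkeyQ]
          push_cast
          exact_mod_cast hid
        have h3 := mul_left_cancel₀ h10 h2
        linarith

end MDP

/-- For coprime `m, n ≥ 1` and `k ≤ n-1`, `k ≤ m-1`, the number of marked Dyck paths
in the `m × n` rectangle with `k` marks — pairs `(π, M)` of a Dyck path `π` and a
`k`-element subset `M` of its external corners — equals
`(m+n-k-1)! / (m · n · (n-k-1)! (m-k-1)! k!)`. -/
theorem card_marked_dyck_paths (m n k : ℕ) (hm : 1 ≤ m) (hn : 1 ≤ n)
    (hco : Nat.Coprime m n) (hkn : k ≤ n - 1) (hkm : k ≤ m - 1) :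
    (((((Finset.range (m + n)).powerset ×ˢ (Finset.range (m + n)).powerset).filter
        fun P => P.1.card = m ∧ IsDyck m n P.1 ∧ P.2 ⊆ corners m n P.1 ∧
          P.2.card = k).card : ℚ)) =
      (Nat.factorial (m + n - k - 1) : ℚ) /
        ((m : ℚ) * (n : ℚ) * (Nat.factorial (n - k - 1) : ℚ) *
          (Nat.factorial (m - k - 1) : ℚ) * (Nat.factorial k : ℚ)) := by
  have h := MDP.main_aux m n hm hn hco (n - 1 - k) k hkn hkm le_rfl
  simpa [MDP.Aset, MDP.Tq] using h
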